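/- Define f(t) = ( ln(2/(t²+1)) + t² ln(2t²/(t²+1)) ) / (4(t−1)²) for t > 1. Then f is strictly monotonically decreasing on (1, ∞), with lim_{t→1⁺} f(t) = 1/4 and lim_{t→∞} f(t) = (ln 2)/4; consequently (ln 2)/4 ≤ f(t) ≤ 1/4 for all t > 1. -/

import Mathlib

open Filter Set Real


noncomputable def Gfun (t : ℝ) : ℝ := 2*t*Real.log t - (1+t)*Real.log ((1+t^2)/2)
noncomputable def Gd (t : ℝ) : ℝ :=
  2*Real.log t + 2 - Real.log ((1+t^2)/2) - (1+t)*(2*t/(1+t^2))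

lemma hc_pos (t : ℝ) : (0:ℝ) < 1 + t^2 := by positivity

lemma hq_der (t : ℝ) : HasDerivAt (fun t : ℝ => 1 + t^2) (2*t) t := by
  simpa using ((hasDerivAt_pow 2 t).const_add 1)

lemma hlogm_der (t : ℝ) : HasDerivAt (fun t : ℝ => Real.log ((1+t^2)/2)) (2*t/(1+t^2)) t := by
  have h1 : HasDerivAt (fun t : ℝ => (1+t^2)/2) t t := by
    simpa using (hq_der t).div_const 2
  have h2 := h1.log (by positivity : (1+t^2)/2 ≠ 0)
  refine h2.congr_deriv ?_
  field_simp

lemma hfrac_der (t : ℝ) : HasDerivAt (fun t : ℝ => 2*t/(1+t^2)) (2*(1-t^2)/(1+t^2)^2) t := by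
  have h1 : HasDerivAt (fun t : ℝ => 2*t) 2 t := by
    simpa using (hasDerivAt_id t).const_mul 2
  have h2 := h1.div (hq_der t) (by positivity : (1:ℝ)+t^2 ≠ 0)
  refine h2.congr_deriv ?_
  field_simp
  ring

lemma hGd_der (t : ℝ) (ht : 0 < t) :
    HasDerivAt Gd (2*(t-1)^2*(t+1)/(t*(1+t^2)^2)) t := by
  have h1 : HasDerivAt (fun t : ℝ => 2*Real.log t + 2) (2/t) t := by
    simpa [div_eq_mul_inv] using (((Real.hasDerivAt_log (ne_of_gt ht)).const_mul 2).add_const 2)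
  have h2 : HasDerivAt (fun t : ℝ => (1+t)*(2*t/(1+t^2)))
      (1*(2*t/(1+t^2)) + (1+t)*(2*(1-t^2)/(1+t^2)^2)) t := by
    have hl : HasDerivAt (fun t : ℝ => 1 + t) 1 t := by
      simpa using (hasDerivAt_id t).const_add 1
    exact hl.mul (hfrac_der t)
  have := (h1.sub (hlogm_der t)).sub h2
  refine this.congr_deriv ?_
  have h1t : (1:ℝ) + t^2 ≠ 0 := by positivity
  field_simp
  ring

lemma hGfun_der (t : ℝ) (ht : 0 < t) : HasDerivAt Gfun (Gd t) t := by
  have h1 : HasDerivAt (fun t : ℝ => 2*t*Real.log t) (2*Real.log t + 2) t := by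
    have h2 : HasDerivAt (fun t : ℝ => 2*t) 2 t := by
      simpa using (hasDerivAt_id t).const_mul 2
    have := h2.mul (Real.hasDerivAt_log (ne_of_gt ht))
    refine this.congr_deriv ?_
    field_simp
  have h3 : HasDerivAt (fun t : ℝ => (1+t)*Real.log ((1+t^2)/2))
      (1*Real.log ((1+t^2)/2) + (1+t)*(2*t/(1+t^2))) t := by
    have hl : HasDerivAt (fun t : ℝ => 1 + t) 1 t := by
      simpa using (hasDerivAt_id t).const_add 1
    exact hl.mul (hlogm_der t)
  have := h1.sub h3
  refine this.congr_deriv ?_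
  simp [Gd]
  ring

lemma Gd_pos (t : ℝ) (ht : 1 < t) : 0 < Gd t := by
  have ht0 : (0:ℝ) < 1 := one_pos
  have h1 : StrictMonoOn Gd (Set.Ici 1) := by
    apply strictMonoOn_of_deriv_pos (convex_Ici 1)
    · intro x hx
      exact (hGd_der x (lt_of_lt_of_le one_pos hx)).continuousAt.continuousWithinAt
    · intro x hx
      rw [interior_Ici] at hx
      have hx1 : (1:ℝ) < x := hx
      have hx0 : (0:ℝ) < x := lt_trans one_pos hx1
      rw [(hGd_der x hx0).deriv]
      have h2 : (0:ℝ) < (x-1)^2 := by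
        have : x - 1 ≠ 0 := by linarith
        positivity
      have h3 : (0:ℝ) < x+1 := by linarith
      have h4 : (0:ℝ) < x*(1+x^2)^2 := by positivity
      positivity
  have h0 : Gd 1 = 0 := by
    norm_num [Gd]
  have := h1 (Set.mem_Ici.2 le_rfl) (Set.mem_Ici.2 (le_of_lt ht)) ht
  rwa [h0] at this

lemma Gfun_pos (t : ℝ) (ht : 1 < t) : 0 < Gfun t := by
  have h1 : StrictMonoOn Gfun (Set.Ici 1) := by
    apply strictMonoOn_of_deriv_pos (convex_Ici 1)
    · intro x hx
      exact (hGfun_der x (lt_of_lt_of_le one_pos hx)).continuousAt.continuousWithinAt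
    · intro x hx
      rw [interior_Ici] at hx
      rw [(hGfun_der x (lt_trans one_pos hx)).deriv]
      exact Gd_pos x hx
  have h0 : Gfun 1 = 0 := by
    norm_num [Gfun]
  have := h1 (Set.mem_Ici.2 le_rfl) (Set.mem_Ici.2 (le_of_lt ht)) ht
  rwa [h0] at this

noncomputable def Nf (t : ℝ) : ℝ :=
  Real.log (2 / (t ^ 2 + 1)) + t ^ 2 * Real.log (2 * t ^ 2 / (t ^ 2 + 1))
noncomputable def Lf (t : ℝ) : ℝ := Real.log (2 * t ^ 2 / (t ^ 2 + 1))

lemma hc_pos' (t : ℝ) : (0:ℝ) < t^2 + 1 := by positivity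

lemma hq_der' (t : ℝ) : HasDerivAt (fun t : ℝ => t^2 + 1) (2*t) t := by
  simpa using ((hasDerivAt_pow 2 t).add_const 1)

lemma hLf_der (t : ℝ) (ht : 0 < t) : HasDerivAt Lf (2/(t*(t^2+1))) t := by
  have h1 : HasDerivAt (fun t : ℝ => 2 * t^2) (4*t) t := by
    have := (hasDerivAt_pow 2 t).const_mul 2
    simpa using this.congr_deriv (by ring)
  have h2 := h1.div (hq_der' t) (ne_of_gt (hc_pos' t))
  have h3 : (2 * t^2 / (t^2+1)) ≠ 0 := by positivity
  have h4 := h2.log h3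
  refine h4.congr_deriv ?_
  have h5 : t^2 + 1 ≠ 0 := ne_of_gt (hc_pos' t)
  simp only [Pi.div_apply]
  field_simp
  ring

lemma hA_der (t : ℝ) : HasDerivAt (fun t : ℝ => Real.log (2/(t^2+1))) (-(2*t)/(t^2+1)) t := by
  have h1 : HasDerivAt (fun t : ℝ => 2/(t^2+1)) (-(2*(2*t))/(t^2+1)^2) t := by
    have := (hasDerivAt_const t (2:ℝ)).div (hq_der' t) (ne_of_gt (hc_pos' t))
    refine this.congr_deriv ?_
    ring
  have h3 : (2 / (t^2+1)) ≠ 0 := by positivity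
  have h4 := h1.log h3
  refine h4.congr_deriv ?_
  have h5 : t^2 + 1 ≠ 0 := ne_of_gt (hc_pos' t)
  field_simp

lemma hNf_der (t : ℝ) (ht : 0 < t) : HasDerivAt Nf (2*t*Lf t) t := by
  have h1 : HasDerivAt (fun t : ℝ => t^2 * Lf t) (2*t*Lf t + t^2*(2/(t*(t^2+1)))) t := by
    have := (hasDerivAt_pow 2 t).mul (hLf_der t ht)
    refine this.congr_deriv ?_
    ring
  have h2 := (hA_der t).add h1
  have : Nf = fun t => Real.log (2/(t^2+1)) + t^2 * Lf t := rfl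
  rw [this]
  refine h2.congr_deriv ?_
  have h5 : t^2 + 1 ≠ 0 := ne_of_gt (hc_pos' t)
  have h6 : t ≠ 0 := ne_of_gt ht
  field_simp
  ring

lemma hf_der (t : ℝ) (ht : 1 < t) :
    HasDerivAt (fun t => Nf t / (4*(t-1)^2)) (-(Gfun t)/(2*(t-1)^3)) t := by
  have ht0 : (0:ℝ) < t := lt_trans one_pos ht
  have hD : HasDerivAt (fun t : ℝ => 4*(t-1)^2) (8*(t-1)) t := by
    have h1 : HasDerivAt (fun t : ℝ => t - 1) 1 t := (hasDerivAt_id t).sub_const 1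
    have := (h1.pow 2).const_mul 4
    refine this.congr_deriv ?_
    ring
  have hDne : (4*(t-1)^2 : ℝ) ≠ 0 := by
    have : t - 1 ≠ 0 := by linarith
    positivity
  have h := (hNf_der t ht0).div hD hDne
  refine h.congr_deriv ?_
  -- value identity
  have h1 : t^2 + 1 ≠ 0 := ne_of_gt (hc_pos' t)
  have h2 : t ≠ 0 := ne_of_gt ht0
  have h3 : t - 1 ≠ 0 := by linarith
  have e1 : Lf t = Real.log 2 + 2*Real.log t - Real.log (t^2+1) := by
    rw [Lf, Real.log_div (by positivity) h1, Real.log_mul (by norm_num) (by positivity),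
      Real.log_pow]
    push_cast; ring
  have e2 : Nf t = (Real.log 2 - Real.log (t^2+1))
      + t^2 * (Real.log 2 + 2*Real.log t - Real.log (t^2+1)) := by
    rw [Nf, Real.log_div (by norm_num) h1, ← e1, Lf]
  have e3 : Gfun t = 2*t*Real.log t - (1+t)*(Real.log (t^2+1) - Real.log 2) := by
    rw [Gfun, Real.log_div (by positivity) (by norm_num), show (1:ℝ)+t^2 = t^2+1 by ring]
  rw [e1, e2, e3]
  field_simp
  ring



lemma Lf_one : Lf 1 = 0 := by norm_num [Lf]
lemma Nf_one : Nf 1 = 0 := by norm_num [Nf]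

lemma lim_one : Tendsto (fun t => Nf t / (4*(t-1)^2)) (nhdsWithin 1 (Set.Ioi 1)) (nhds (1/4)) := by
  have hmem : ∀ᶠ x in nhdsWithin (1:ℝ) (Set.Ioi 1), (1:ℝ) < x :=
    eventually_mem_nhdsWithin
  apply HasDerivAt.lhopital_zero_nhdsGT
      (f' := fun x => 2*x*Lf x) (g' := fun x => 8*(x-1))
  · filter_upwards [hmem] with x hx
    exact hNf_der x (lt_trans one_pos hx)
  · filter_upwards [hmem] with x hx
    have h1 : HasDerivAt (fun t : ℝ => t - 1) 1 x := (hasDerivAt_id x).sub_const 1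
    have := (h1.pow 2).const_mul 4
    refine this.congr_deriv ?_
    ring
  · filter_upwards [hmem] with x hx
    have : x - 1 ≠ 0 := by linarith
    positivity
  · have hc : ContinuousAt Nf 1 := (hNf_der 1 one_pos).continuousAt
    have := hc.tendsto
    rw [Nf_one] at this
    exact this.mono_left nhdsWithin_le_nhds
  · have : Tendsto (fun x : ℝ => 4*(x-1)^2) (nhds 1) (nhds (4*((1:ℝ)-1)^2)) :=
      Continuous.tendsto (by continuity) 1
    norm_num at this
    exact this.mono_left nhdsWithin_le_nhds
  · -- Tendsto (fun x => 2*x*Lf x / (8*(x-1))) (𝓝[>]1) (𝓝 (1/4))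
    have hslope : Tendsto (slope Lf 1) (nhdsWithin 1 (Set.Ioi 1)) (nhds 1) := by
      have hd : HasDerivAt Lf 1 1 := by
        have := hLf_der 1 one_pos
        norm_num at this
        exact this
      have h := hasDerivAt_iff_tendsto_slope.1 hd
      exact h.mono_left (nhdsWithin_mono _ (fun x hx => ne_of_gt hx))
    have hx4 : Tendsto (fun x : ℝ => x/4) (nhdsWithin 1 (Set.Ioi 1)) (nhds (1/4)) := by
      have : Tendsto (fun x : ℝ => x/4) (nhds 1) (nhds (1/4)) := by
        have := (continuous_id.div_const (4:ℝ)).tendsto 1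
        simpa using this
      exact this.mono_left nhdsWithin_le_nhds
    have hmul := hx4.mul hslope
    rw [mul_one] at hmul
    apply hmul.congr'
    filter_upwards [hmem] with x hx
    have h1 : x - 1 ≠ 0 := by linarith
    rw [slope_def_field, Lf_one]
    field_simp
    ring

lemma lim_top : Tendsto (fun t => Nf t / (4*(t-1)^2)) atTop (nhds (Real.log 2 / 4)) := by
  have hinv : Tendsto (fun t : ℝ => 1/t) atTop (nhds 0) := by
    simpa [one_div] using (tendsto_inv_atTop_zero : Tendsto (fun x:ℝ => x⁻¹) atTop (nhds 0))
  have hinv2 : Tendsto (fun t : ℝ => 1/t^2) atTop (nhds 0) := by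
    have := hinv.mul hinv
    rw [mul_zero] at this
    apply this.congr
    intro t
    ring
  have hlog2 : Tendsto (fun t : ℝ => Real.log t/t^2) atTop (nhds 0) := by
    have h := (isLittleO_log_rpow_atTop (show (0:ℝ) < 2 by norm_num)).tendsto_div_nhds_zero
    apply h.congr'
    filter_upwards [eventually_gt_atTop (0:ℝ)] with t ht
    rw [Real.rpow_two]
  have hlog1 : Tendsto (fun t : ℝ => Real.log (1+1/t^2)) atTop (nhds 0) := by
    have hc : ContinuousAt Real.log 1 := Real.continuousAt_log one_ne_zero
    have h1 : Tendsto (fun t : ℝ => 1+1/t^2) atTop (nhds 1) := by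
      have := hinv2.const_add (1:ℝ)
      simpa using this
    have := hc.tendsto.comp h1
    simpa [Function.comp_def] using this
  have hA : Tendsto (fun t : ℝ => Nf t / t^2) atTop (nhds (Real.log 2)) := by
    have hB : Tendsto (fun t : ℝ => (1/t^2+1)*Real.log 2 - 2*(Real.log t/t^2)
        - (1/t^2+1)*Real.log (1+1/t^2)) atTop
        (nhds ((0+1)*Real.log 2 - 2*0 - (0+1)*0)) := by
      exact (((hinv2.add_const 1).mul_const _).sub (hlog2.const_mul 2)).sub
        ((hinv2.add_const 1).mul hlog1)
    norm_num at hB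
    apply hB.congr'
    filter_upwards [eventually_gt_atTop (1:ℝ)] with t ht
    have ht0 : (0:ℝ) < t := lt_trans one_pos ht
    have h1 : t^2 + 1 ≠ 0 := ne_of_gt (hc_pos' t)
    have h2 : t ≠ 0 := ne_of_gt ht0
    have e4 : Real.log (1+1/t^2) = Real.log (t^2+1) - 2*Real.log t := by
      rw [show (1:ℝ)+1/t^2 = (t^2+1)/t^2 by field_simp,
        Real.log_div h1 (by positivity), Real.log_pow]
      push_cast; ring
    simp only [← one_div]
    rw [Nf, Real.log_div (by norm_num) h1, Real.log_div (by positivity) h1,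
      Real.log_mul (by norm_num) (by positivity), Real.log_pow, e4]
    push_cast
    field_simp
    ring
  have hC : Tendsto (fun t : ℝ => t^2/(4*(t-1)^2)) atTop (nhds (1/4)) := by
    have h1 : Tendsto (fun t : ℝ => 1/(t-1)) atTop (nhds 0) := by
      have := hinv.comp (tendsto_atTop_add_const_right atTop (-1) tendsto_id)
      simpa [Function.comp_def, sub_eq_add_neg] using this
    have h2 : Tendsto (fun x : ℝ => (1+x)^2/4) (nhds 0) (nhds (1/4)) := by
      have := (Continuous.tendsto (by continuity : Continuous (fun x : ℝ => (1+x)^2/4)) 0)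
      norm_num at this
      exact this
    have h3 := h2.comp h1
    apply h3.congr'
    filter_upwards [eventually_gt_atTop (1:ℝ)] with t ht
    have h4 : t - 1 ≠ 0 := by linarith
    simp only [Function.comp]
    field_simp
    ring
  have := hA.mul hC
  rw [show Real.log 2 * (1/4) = Real.log 2 / 4 by ring] at this
  apply this.congr'
  filter_upwards [eventually_gt_atTop (1:ℝ)] with t ht
  have h2 : t ≠ 0 := by positivity
  have h4 : t - 1 ≠ 0 := by linarith
  field_simp

theorem js_fisher_ratio_monotone
    (f : ℝ → ℝ)
    (hf : f = fun t => (Real.log (2 / (t ^ 2 + 1))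
      + t ^ 2 * Real.log (2 * t ^ 2 / (t ^ 2 + 1))) / (4 * (t - 1) ^ 2)) :
    StrictAntiOn f (Set.Ioi 1) ∧
    Tendsto f (nhdsWithin 1 (Set.Ioi 1)) (nhds (1 / 4)) ∧
    Tendsto f atTop (nhds (Real.log 2 / 4)) ∧
    ∀ t : ℝ, 1 < t → Real.log 2 / 4 ≤ f t ∧ f t ≤ 1 / 4 := by
  have hfe : f = fun t => Nf t / (4*(t-1)^2) := hf
  have hanti : StrictAntiOn f (Set.Ioi 1) := by
    rw [hfe]
    apply strictAntiOn_of_deriv_neg (convex_Ioi 1)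
    · intro x hx
      exact (hf_der x hx).continuousAt.continuousWithinAt
    · intro x hx
      rw [interior_Ioi] at hx
      rw [(hf_der x hx).deriv]
      have hg := Gfun_pos x hx
      have h3 : (0:ℝ) < 2*(x-1)^3 := by
        have : (0:ℝ) < x - 1 := by simpa using sub_pos.2 (Set.mem_Ioi.1 hx)
        positivity
      exact div_neg_of_neg_of_pos (by linarith) h3
  have hlim1 : Tendsto f (nhdsWithin 1 (Set.Ioi 1)) (nhds (1/4)) := by
    rw [hfe]; exact lim_one
  have hlimtop : Tendsto f atTop (nhds (Real.log 2 / 4)) := by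
    rw [hfe]; exact lim_top
  refine ⟨hanti, hlim1, hlimtop, fun t ht => ⟨?_, ?_⟩⟩
  · apply le_of_tendsto hlimtop
    filter_upwards [eventually_gt_atTop t] with s hs
    exact (hanti (Set.mem_Ioi.2 ht) (Set.mem_Ioi.2 (lt_trans ht hs)) hs).le
  · apply ge_of_tendsto hlim1
    filter_upwards [Ioo_mem_nhdsGT ht] with s hs
    exact (hanti (Set.mem_Ioi.2 hs.1) (Set.mem_Ioi.2 ht) hs.2).le
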